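/- Let k ≥ 3 be an integer and 𝔽 a field in which the images of 2, k and k − 2 are nonzero, and let L ∈ 𝔽 be nonzero. Define the linear map Δ : 𝔽² × 𝔽^k → 𝔽⁴ by Δ(a, b, c₁, …, c_k) = (c₂ − L·a, c₁ − L⁻¹·b, a − (2/k)·(c₁ + ⋯ + c_k) + c₁, b − (2/k)·(c₁ + ⋯ + c_k) + c₂). Then the kernel of Δ has dimension k − 1 if L = 1 and dimension k − 2 if L ≠ 1. -/

import Mathlib

open Finset

private lemma fin_cons_one {n : ℕ} {α : Type*} (x : α) (f : Fin (n+1) → α) :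
    (Fin.cons x f : Fin (n+2) → α) 1 = f 0 := by
  have h : (1 : Fin (n+2)) = Fin.succ 0 := by ext; simp [Fin.val_one]
  rw [h, Fin.cons_succ]

theorem mayerVietoris_kernel_dim {F : Type*} [Field F] [DecidableEq F] (k : ℕ) (hk : 3 ≤ k)
    (h2 : (2 : F) ≠ 0) (hkF : (k : F) ≠ 0) (hk2 : (k : F) - 2 ≠ 0) (L : F) (hL : L ≠ 0) :
    ∃ S : Submodule F (F × F × (Fin k → F)),
      (∀ (a b : F) (c : Fin k → F),
        (a, b, c) ∈ S ↔
          (c ⟨1, by omega⟩ - L * a = 0 ∧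
           c ⟨0, by omega⟩ - L⁻¹ * b = 0 ∧
           a - (2 / (k : F)) * (∑ i, c i) + c ⟨0, by omega⟩ = 0 ∧
           b - (2 / (k : F)) * (∑ i, c i) + c ⟨1, by omega⟩ = 0)) ∧
      Module.finrank F S = if L = 1 then k - 1 else k - 2 := by
  obtain ⟨m, rfl⟩ : ∃ m, k = m + 3 := ⟨k - 3, by omega⟩
  set K : F := ((m + 3 : ℕ) : F) with hKdef
  have hK : K ≠ 0 := hkF
  have hK2 : K - 2 ≠ 0 := hk2
  have h2K : (2 : F) / K ≠ 0 := div_ne_zero h2 hK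
  -- the difference map
  let Δ : (F × F × (Fin (m+3) → F)) →ₗ[F] F × F × F × F :=
  { toFun := fun x =>
      (x.2.2 1 - L * x.1, x.2.2 0 - L⁻¹ * x.2.1,
       x.1 - (2 / K) * (∑ i, x.2.2 i) + x.2.2 0,
       x.2.1 - (2 / K) * (∑ i, x.2.2 i) + x.2.2 1),
    map_add' := by
      rintro ⟨a, b, c⟩ ⟨a', b', c'⟩
      simp only [Prod.mk_add_mk, Pi.add_apply, Prod.mk.injEq, Finset.sum_add_distrib]
      refine ⟨by ring, by ring, by ring, by ring⟩
    map_smul' := by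
      rintro r ⟨a, b, c⟩
      simp only [Prod.smul_mk, Pi.smul_apply, smul_eq_mul, Prod.mk.injEq,
        ← Finset.mul_sum, RingHom.id_apply]
      refine ⟨by ring, by ring, by ring, by ring⟩ }
  have hiff : ∀ (a b : F) (c : Fin (m+3) → F),
      (a, b, c) ∈ LinearMap.ker Δ ↔
        (c ⟨1, by omega⟩ - L * a = 0 ∧
         c ⟨0, by omega⟩ - L⁻¹ * b = 0 ∧
         a - (2 / K) * (∑ i, c i) + c ⟨0, by omega⟩ = 0 ∧
         b - (2 / K) * (∑ i, c i) + c ⟨1, by omega⟩ = 0) := by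
    intro a b c
    simp only [LinearMap.mem_ker, LinearMap.coe_mk, AddHom.coe_mk, Δ, Prod.mk_eq_zero,
      Fin.mk_zero, Fin.mk_one]
  refine ⟨LinearMap.ker Δ, hiff, ?_⟩
  -- decompose sums over Fin (m+3)
  have hsum : ∀ c : Fin (m+3) → F,
      ∑ i, c i = c 0 + (c 1 + ∑ i : Fin (m+1), c i.succ.succ) := by
    intro c
    rw [Fin.sum_univ_succ, Fin.sum_univ_succ, Fin.succ_zero_eq_one]
  by_cases hL1 : L = 1
  · -- resonant case
    subst hL1
    rw [if_pos rfl]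
    let A : (Fin (m+2) → F) → F := fun w => 2 * (∑ i : Fin (m+1), w i.succ) / (K - 2) - w 0
    let φ : (Fin (m+2) → F) →ₗ[F] F × F × (Fin (m+3) → F) :=
    { toFun := fun w => (A w, w 0, Fin.cons (w 0) (Fin.cons (A w) (fun i => w i.succ))),
      map_add' := by
        intro w w'
        have hA : A (w + w') = A w + A w' := by
          simp only [A, Pi.add_apply, Finset.sum_add_distrib]
          ring
        refine Prod.ext hA (Prod.ext rfl ?_)
        show (Fin.cons _ (Fin.cons _ _) : Fin (m+3) → F) = _
        funext j
        refine Fin.cases ?_ (fun i => ?_) j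
        · simp
        · refine Fin.cases ?_ (fun i' => ?_) i <;> simp [hA]
      map_smul' := by
        intro r w
        have hA : A (r • w) = r * A w := by
          simp only [A, Pi.smul_apply, smul_eq_mul, ← Finset.mul_sum]
          ring
        refine Prod.ext hA (Prod.ext rfl ?_)
        show (Fin.cons _ (Fin.cons _ _) : Fin (m+3) → F) = _
        funext j
        refine Fin.cases ?_ (fun i => ?_) j
        · simp
        · refine Fin.cases ?_ (fun i' => ?_) i <;> simp [hA] }
    have hmem : ∀ w, φ w ∈ LinearMap.ker Δ := by
      intro w
      rw [show φ w = (A w, w 0, Fin.cons (w 0) (Fin.cons (A w) (fun i => w i.succ))) from rfl,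
        hiff]
      have e0 : (Fin.cons (w 0) (Fin.cons (A w) (fun i => w i.succ)) : Fin (m+3) → F)
          ⟨0, by omega⟩ = w 0 := by rw [Fin.mk_zero, Fin.cons_zero]
      have e1 : (Fin.cons (w 0) (Fin.cons (A w) (fun i => w i.succ)) : Fin (m+3) → F)
          ⟨1, by omega⟩ = A w := by rw [Fin.mk_one, fin_cons_one, Fin.cons_zero]
      have es : ∑ i, (Fin.cons (w 0) (Fin.cons (A w) (fun i => w i.succ)) : Fin (m+3) → F) i
          = w 0 + (A w + ∑ i : Fin (m+1), w i.succ) := by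
        rw [Fin.sum_cons, Fin.sum_cons]
      rw [e0, e1, es]
      have hAw : A w = 2 * (∑ i : Fin (m+1), w i.succ) / (K - 2) - w 0 := rfl
      refine ⟨by simp, by simp, ?_, ?_⟩ <;>
      · rw [hAw]
        field_simp
        ring
    let ψ := φ.codRestrict (LinearMap.ker Δ) hmem
    have hinj : Function.Injective ψ := by
      intro w w' h
      have h' : φ w = φ w' := congrArg Subtype.val h
      have hb : w 0 = w' 0 := congrArg (fun x => x.2.1) h'
      have hc := congrArg (fun x => x.2.2) h'
      funext j
      refine Fin.cases hb (fun i => ?_) j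
      have := congrFun hc (Fin.succ (Fin.succ i))
      simpa [φ] using this
    have hsurj : Function.Surjective ψ := by
      rintro ⟨⟨a, b, c⟩, hx⟩
      obtain ⟨h1, h2', h3, h4⟩ := (hiff a b c).mp hx
      rw [Fin.mk_one] at h1
      rw [Fin.mk_zero] at h2'
      rw [Fin.mk_zero, hsum c] at h3
      simp only [inv_one, one_mul] at h1 h2'
      have hc1 : c 1 = a := by linear_combination h1
      have hc0 : c 0 = b := by linear_combination h2'
      set T : F := ∑ i : Fin (m+1), c i.succ.succ with hT
      have ha : a = 2 * T / (K - 2) - b := by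
        rw [hc0, hc1] at h3
        field_simp at h3 ⊢
        linear_combination h3
      refine ⟨Fin.cons b (fun i => c i.succ.succ), ?_⟩
      apply Subtype.ext
      show φ _ = (a, b, c)
      have hw0 : (Fin.cons b (fun i => c i.succ.succ) : Fin (m+2) → F) 0 = b := Fin.cons_zero _ _
      have hws : ∀ i : Fin (m+1),
          (Fin.cons b (fun i => c i.succ.succ) : Fin (m+2) → F) i.succ = c i.succ.succ :=
        fun i => Fin.cons_succ _ _ _
      have hAw : A (Fin.cons b (fun i => c i.succ.succ)) = a := by
        simp only [A, hw0]
        rw [Finset.sum_congr rfl (fun i _ => hws i), ← hT, ha]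
      show (_, _, _) = (a, b, c)
      rw [hAw, hw0]
      refine Prod.ext rfl (Prod.ext rfl ?_)
      funext j
      refine Fin.cases ?_ (fun i => ?_) j
      · simpa using hc0.symm
      · refine Fin.cases ?_ (fun i' => ?_) i
        · rw [← Fin.succ_zero_eq_one] at hc1
          simpa using hc1.symm
        · simp [hws]
    have e := LinearEquiv.ofBijective ψ ⟨hinj, hsurj⟩
    rw [← e.finrank_eq, Module.finrank_pi]
    simp
  · -- non-resonant case
    rw [if_neg hL1]
    have h1L : (1 : F) - L ≠ 0 := sub_ne_zero.mpr (Ne.symm hL1)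
    let A : (Fin (m+1) → F) → F := fun v => (∑ i, v i) / (1 - L)
    let φ : (Fin (m+1) → F) →ₗ[F] F × F × (Fin (m+3) → F) :=
    { toFun := fun v => (A v, -(L * A v), Fin.cons (-(A v)) (Fin.cons (L * A v) v)),
      map_add' := by
        intro v v'
        have hA : A (v + v') = A v + A v' := by
          simp only [A, Pi.add_apply, Finset.sum_add_distrib]
          ring
        refine Prod.ext hA (Prod.ext (by show -(L * A (v + v')) = _; rw [hA]; show _ = -(L * A v) + -(L * A v'); ring) ?_)
        show (Fin.cons _ (Fin.cons _ _) : Fin (m+3) → F) = _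
        funext j
        refine Fin.cases ?_ (fun i => ?_) j
        · simp [hA]; ring
        · refine Fin.cases ?_ (fun i' => ?_) i <;> simp [hA] <;> ring
      map_smul' := by
        intro r v
        have hA : A (r • v) = r * A v := by
          simp only [A, Pi.smul_apply, smul_eq_mul, ← Finset.mul_sum]
          ring
        refine Prod.ext hA (Prod.ext (by show -(L * A (r • v)) = _; rw [hA]; show _ = r • -(L * A v); simp; ring) ?_)
        show (Fin.cons _ (Fin.cons _ _) : Fin (m+3) → F) = _
        funext j
        refine Fin.cases ?_ (fun i => ?_) j
        · simp [hA]
        · refine Fin.cases ?_ (fun i' => ?_) i <;> simp [hA] <;> ring }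
    have hmem : ∀ v, φ v ∈ LinearMap.ker Δ := by
      intro v
      rw [show φ v = (A v, -(L * A v), Fin.cons (-(A v)) (Fin.cons (L * A v) v)) from rfl, hiff]
      have e0 : (Fin.cons (-(A v)) (Fin.cons (L * A v) v) : Fin (m+3) → F)
          ⟨0, by omega⟩ = -(A v) := by rw [Fin.mk_zero, Fin.cons_zero]
      have e1 : (Fin.cons (-(A v)) (Fin.cons (L * A v) v) : Fin (m+3) → F)
          ⟨1, by omega⟩ = L * A v := by rw [Fin.mk_one, fin_cons_one, Fin.cons_zero]
      have es : ∑ i, (Fin.cons (-(A v)) (Fin.cons (L * A v) v) : Fin (m+3) → F) i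
          = -(A v) + (L * A v + ∑ i, v i) := by
        rw [Fin.sum_cons, Fin.sum_cons]
      rw [e0, e1, es]
      have hAv : A v = (∑ i, v i) / (1 - L) := rfl
      refine ⟨by ring, by field_simp; ring, ?_, ?_⟩ <;>
      · rw [hAv]
        field_simp
        ring
    let ψ := φ.codRestrict (LinearMap.ker Δ) hmem
    have hinj : Function.Injective ψ := by
      intro v v' h
      have h' : φ v = φ v' := congrArg Subtype.val h
      have hc := congrArg (fun x => x.2.2) h'
      funext i
      have := congrFun hc (Fin.succ (Fin.succ i))
      simpa [φ] using this
    have hsurj : Function.Surjective ψ := by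
      rintro ⟨⟨a, b, c⟩, hx⟩
      obtain ⟨h1, h2', h3, h4⟩ := (hiff a b c).mp hx
      rw [Fin.mk_one] at h1 h4
      rw [Fin.mk_zero] at h2' h3
      have hb2 : L * c 0 = b := by
        field_simp at h2'
        linear_combination h2'
      have h5 : (1 - L) * (L * a + b) = 0 := by
        linear_combination L * h3 - L * h4 + L * h1 - hb2
      have hb : b = -(L * a) := by
        rcases mul_eq_zero.mp h5 with h | h
        · exact absurd h h1L
        · linear_combination h
      have hc0 : c 0 = -a := by
        have : L * c 0 = L * (-a) := by rw [hb2, hb]; ring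
        exact mul_left_cancel₀ hL this
      have hc1 : c 1 = L * a := by linear_combination h1
      have hs0 : ∑ i, c i = 0 := by
        have h6 : (2 / K) * (∑ i, c i) = 0 := by linear_combination hc0 - h3
        rcases mul_eq_zero.mp h6 with h | h
        · exact absurd h h2K
        · exact h
      set T : F := ∑ i : Fin (m+1), c i.succ.succ with hT
      have hTa : T = (1 - L) * a := by
        rw [hsum c, hc0, hc1] at hs0
        linear_combination hs0
      have ha : A (fun i => c i.succ.succ) = a := by
        simp only [A, ← hT, hTa]
        field_simp
      refine ⟨fun i => c i.succ.succ, ?_⟩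
      apply Subtype.ext
      show (_, _, _) = (a, b, c)
      rw [ha, hb]
      refine Prod.ext rfl (Prod.ext rfl ?_)
      funext j
      refine Fin.cases ?_ (fun i => ?_) j
      · simpa using hc0.symm
      · refine Fin.cases ?_ (fun i' => ?_) i
        · rw [← Fin.succ_zero_eq_one] at hc1
          simpa using hc1.symm
        · simp
    have e := LinearEquiv.ofBijective ψ ⟨hinj, hsurj⟩
    rw [← e.finrank_eq, Module.finrank_pi]
    simp
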